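/- The multiplicative semigroup L_n(F) consisting of the zero matrix together with all n×n matrices of rank 1 over a finite field F is isomorphic to a Rees matrix semigroup M(F*, T), where F* is the multiplicative group of F, the index sets are indexed by the one-dimensional subspaces of F^n (with chosen representative vectors v_i), and T(λ, i) = v_λᵀ v_i. -/

import Mathlib

open Matrix Module Submodule

/-- Multiplication in the Rees matrix semigroup over a group `G` (zero = `none`). -/
def reesMul {I Λ G : Type} [Mul G] (M : Λ → I → Option G) :
    Option (I × G × Λ) → Option (I × G × Λ) → Option (I × G × Λ)
  | some (i, g, l), some (j, h, c) => (M l j).map fun m => (i, g * m * h, c)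
  | _, _ => none

section aux
set_option linter.unusedSectionVars false
variable {F : Type} [Field F] [Fintype F] [DecidableEq F] {n : ℕ}

lemma stmt6_rank_vecMulVec_le (u w : Fin n → F) : (vecMulVec u w).rank ≤ 1 := by
  rw [vecMulVec_eq (ι := Unit) u w]
  calc (replicateCol Unit u * replicateRow Unit w).rank ≤ (replicateRow Unit w).rank := Matrix.rank_mul_le_right _ _
    _ ≤ 1 := by simpa using Matrix.rank_le_card_height (replicateRow Unit w)

lemma stmt6_vecMulVec_mul (a b a' b' : Fin n → F) :
    vecMulVec a b * vecMulVec a' b' = (b ⬝ᵥ a') • vecMulVec a b' := by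
  ext i j
  simp only [Matrix.mul_apply, vecMulVec_apply, Matrix.smul_apply, dotProduct, smul_eq_mul,
    Finset.sum_mul, Finset.mul_sum]
  exact Finset.sum_congr rfl fun k _ => by ring

lemma stmt6_smul_vecMulVec (c : F) (u w : Fin n → F) :
    vecMulVec (c • u) w = c • vecMulVec u w := by
  ext i j; simp [vecMulVec_apply, mul_assoc]

lemma stmt6_vecMulVec_smul (c : F) (u w : Fin n → F) :
    vecMulVec u (c • w) = c • vecMulVec u w := by
  ext i j; simp [vecMulVec_apply]; ring

lemma stmt6_span_rep {U : Submodule F (Fin n → F)} (h : finrank F U = 1) {x : Fin n → F}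
    (hx : x ∈ U) (hx0 : x ≠ 0) : Submodule.span F {x} = U := by
  apply Submodule.eq_of_le_of_finrank_le ((span_singleton_le_iff_mem x U).2 hx)
  rw [h, finrank_span_singleton hx0]

lemma stmt6_rank_decomp {A : Matrix (Fin n) (Fin n) F} (h : A.rank ≤ 1) (h0 : A ≠ 0) :
    ∃ u w : Fin n → F, u ≠ 0 ∧ w ≠ 0 ∧ A = vecMulVec u w := by
  obtain ⟨i0, j0, hij⟩ : ∃ i j, A i j ≠ 0 := by
    by_contra hc
    push_neg at hc
    exact h0 (by ext i j; simp [hc])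
  set u : Fin n → F := fun i => A i j0 with hu
  have hu0 : u ≠ 0 := fun hh => hij (by simpa [hu] using congrFun hh i0)
  have hspan : Submodule.span F (Set.range Aᵀ) = Submodule.span F {u} := by
    refine (stmt6_span_rep ?_ ?_ ?_).symm
    · refine le_antisymm ?_ ?_
      · rwa [Matrix.rank_eq_finrank_span_cols] at h
      · rw [Nat.succ_le_iff, finrank_pos_iff_exists_ne_zero]
        refine ⟨⟨u, subset_span ⟨j0, rfl⟩⟩, ?_⟩
        simpa [Submodule.mk_eq_zero] using hu0
    · exact subset_span ⟨j0, rfl⟩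
    · exact hu0
  have hcol : ∀ j, ∃ c : F, (fun i => A i j) = c • u := by
    intro j
    have : (Aᵀ j) ∈ Submodule.span F {u} := hspan ▸ subset_span ⟨j, rfl⟩
    obtain ⟨c, hc⟩ := mem_span_singleton.1 this
    exact ⟨c, hc.symm⟩
  choose w hw using hcol
  refine ⟨u, w, hu0, ?_, ?_⟩
  · intro hwz
    have := congrFun (hw j0) i0
    rw [hwz] at this
    simp at this
    exact hij this
  · ext i j
    have := congrFun (hw j) i
    simpa [vecMulVec_apply, mul_comm] using this

end aux

theorem stmt6 (F : Type) [Field F] [Fintype F] [DecidableEq F] (n : ℕ) (hn : 1 ≤ n) :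
    ∃ v : {U : Submodule F (Fin n → F) // Module.finrank F U = 1} → (Fin n → F),
      (∀ U, v U ∈ U.1 ∧ v U ≠ 0) ∧
      ∃ T : {U : Submodule F (Fin n → F) // Module.finrank F U = 1} →
            {U : Submodule F (Fin n → F) // Module.finrank F U = 1} → Option Fˣ,
        (∀ l i, T l i =
          if h : dotProduct (v l) (v i) = 0 then none
          else some (Units.mk0 _ h)) ∧
        ∃ φ : {A : Matrix (Fin n) (Fin n) F // A.rank ≤ 1} →
              Option ({U : Submodule F (Fin n → F) // Module.finrank F U = 1} × Fˣ ×
                      {U : Submodule F (Fin n → F) // Module.finrank F U = 1}),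
          Function.Bijective φ ∧
          (∀ A : {A : Matrix (Fin n) (Fin n) F // A.rank ≤ 1}, A.1 = 0 → φ A = none) ∧
          ∀ A B C : {A : Matrix (Fin n) (Fin n) F // A.rank ≤ 1},
            C.1 = A.1 * B.1 → φ C = reesMul T (φ A) (φ B) := by
  classical
  set I := {U : Submodule F (Fin n → F) // Module.finrank F U = 1}
  have hv : ∀ U : I, ∃ x : Fin n → F, x ∈ U.1 ∧ x ≠ 0 := by
    intro U
    have : 0 < finrank F U.1 := by rw [U.2]; norm_num
    obtain ⟨⟨x, hx⟩, hx0⟩ := (finrank_pos_iff_exists_ne_zero).1 this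
    exact ⟨x, hx, by simpa [Submodule.mk_eq_zero] using hx0⟩
  choose v hv1 hv2 using hv
  have hvspan : ∀ U : I, Submodule.span F {v U} = U.1 :=
    fun U => stmt6_span_rep U.2 (hv1 U) (hv2 U)
  refine ⟨v, fun U => ⟨hv1 U, hv2 U⟩, ?_⟩
  set T : I → I → Option Fˣ := fun l i =>
    if h : dotProduct (v l) (v i) = 0 then none else some (Units.mk0 _ h) with hT
  refine ⟨T, fun l i => rfl, ?_⟩
  -- the inverse map
  set ψ : Option (I × Fˣ × I) → {A : Matrix (Fin n) (Fin n) F // A.rank ≤ 1} := fun x =>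
    match x with
    | none => ⟨0, by simp [Matrix.rank_zero]⟩
    | some (i, c, l) => ⟨vecMulVec ((c : F) • v i) (v l), stmt6_rank_vecMulVec_le _ _⟩
    with hψ
  have ψval : ∀ (i : I) (c : Fˣ) (l : I),
      (ψ (some (i, c, l))).1 = (c : F) • vecMulVec (v i) (v l) := by
    intro i c l
    simp only [hψ]
    rw [stmt6_smul_vecMulVec]
  have ψne : ∀ (i : I) (c : Fˣ) (l : I), (ψ (some (i, c, l))).1 ≠ 0 := by
    intro i c l h0
    obtain ⟨x, hx⟩ := Function.ne_iff.1 (hv2 i)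
    obtain ⟨y, hy⟩ := Function.ne_iff.1 (hv2 l)
    simp only [Pi.zero_apply] at hx hy
    have := congrFun (congrFun ((ψval i c l) ▸ h0) x) y
    simp only [Matrix.smul_apply, vecMulVec_apply, Matrix.zero_apply, smul_eq_mul] at this
    rcases mul_eq_zero.1 this with h | h
    · exact c.ne_zero h
    · rcases mul_eq_zero.1 h with h | h
      · exact hx h
      · exact hy h
  -- injectivity
  have hinj : Function.Injective ψ := by
    rintro (_ | ⟨i, c, l⟩) (_ | ⟨i', c', l'⟩) hEq
    · rfl
    · exact absurd (congrArg Subtype.val hEq).symm (ψne i' c' l')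
    · exact absurd (congrArg Subtype.val hEq) (ψne i c l)
    · have hE : ∀ x y, (c : F) * (v i x * v l y) = (c' : F) * (v i' x * v l' y) := by
        intro x y
        have := congrFun (congrFun (congrArg Subtype.val hEq) x) y
        rw [ψval, ψval] at this
        simpa [vecMulVec_apply, mul_assoc] using this
      obtain ⟨x0, hx0⟩ := Function.ne_iff.1 (hv2 i)
      obtain ⟨y0, hy0⟩ := Function.ne_iff.1 (hv2 l)
      simp only [Pi.zero_apply] at hx0 hy0
      -- i = i'
      have hii : i = i' := by
        have hd : (c' : F) * v l' y0 ≠ 0 := by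
          intro hz
          apply hx0
          have := hE x0 y0
          rw [show (c' : F) * (v i' x0 * v l' y0) = v i' x0 * ((c' : F) * v l' y0) by ring,
            hz, mul_zero] at this
          have := mul_eq_zero.1 this
          rcases this with h | h
          · exact absurd h c.ne_zero
          · rcases mul_eq_zero.1 h with h | h
            · exact absurd h hx0
            · exact absurd h hy0
        have hvi' : v i' = (((c' : F) * v l' y0)⁻¹ * ((c : F) * v l y0)) • v i := by
          funext x
          have key : ((c' : F) * v l' y0) * v i' x = ((c : F) * v l y0) * v i x := by
            linear_combination -(hE x y0)
          simp only [Pi.smul_apply, smul_eq_mul]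
          rw [mul_assoc, ← key, ← mul_assoc, inv_mul_cancel₀ hd, one_mul]
        have hle : Submodule.span F {v i'} ≤ Submodule.span F {v i} := by
          rw [span_singleton_le_iff_mem, hvi']
          exact Submodule.smul_mem _ _ (mem_span_singleton_self _)
        rw [hvspan, hvspan] at hle
        exact Subtype.ext (Submodule.eq_of_le_of_finrank_le hle (by rw [i.2, i'.2])).symm
      subst hii
      -- l = l'
      have hcx : (c' : F) * v i x0 ≠ 0 := mul_ne_zero c'.ne_zero hx0
      have hvl' : v l' = (((c' : F) * v i x0)⁻¹ * ((c : F) * v i x0)) • v l := by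
        funext y
        have key : ((c' : F) * v i x0) * v l' y = ((c : F) * v i x0) * v l y := by
          linear_combination -(hE x0 y)
        simp only [Pi.smul_apply, smul_eq_mul]
        rw [mul_assoc, ← key, ← mul_assoc, inv_mul_cancel₀ hcx, one_mul]
      have hll : l = l' := by
        have hle : Submodule.span F {v l'} ≤ Submodule.span F {v l} := by
          rw [span_singleton_le_iff_mem, hvl']
          exact Submodule.smul_mem _ _ (mem_span_singleton_self _)
        rw [hvspan, hvspan] at hle
        exact Subtype.ext (Submodule.eq_of_le_of_finrank_le hle (by rw [l.2, l'.2])).symm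
      subst hll
      -- c = c'
      have : (c : F) = (c' : F) := by
        have h1 := hE x0 y0
        have h2 : v i x0 * v l y0 ≠ 0 := mul_ne_zero hx0 hy0
        exact mul_right_cancel₀ h2 h1
      rw [Units.ext this]
  -- surjectivity
  have hsurj : Function.Surjective ψ := by
    rintro ⟨A, hA⟩
    by_cases h0 : A = 0
    · exact ⟨none, by simp [hψ, h0]⟩
    · obtain ⟨u, w, hu0, hw0, hAuw⟩ := stmt6_rank_decomp hA h0
      set i : I := ⟨Submodule.span F {u}, finrank_span_singleton hu0⟩
      set l : I := ⟨Submodule.span F {w}, finrank_span_singleton hw0⟩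
      obtain ⟨a, ha⟩ := mem_span_singleton.1 (show v i ∈ Submodule.span F {u} from hv1 i)
      obtain ⟨b, hb⟩ := mem_span_singleton.1 (show v l ∈ Submodule.span F {w} from hv1 l)
      have ha0 : a ≠ 0 := by rintro rfl; exact hv2 i (by simpa using ha.symm)
      have hb0 : b ≠ 0 := by rintro rfl; exact hv2 l (by simpa using hb.symm)
      have hu : u = a⁻¹ • v i := by rw [← ha, smul_smul, inv_mul_cancel₀ ha0, one_smul]
      have hw : w = b⁻¹ • v l := by rw [← hb, smul_smul, inv_mul_cancel₀ hb0, one_smul]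
      have hEq : A = (a⁻¹ * b⁻¹) • vecMulVec (v i) (v l) := by
        rw [hAuw, hu, hw, stmt6_smul_vecMulVec, stmt6_vecMulVec_smul, smul_smul]
      refine ⟨some (i, Units.mk0 (a⁻¹ * b⁻¹) (by simp [ha0, hb0]), l), ?_⟩
      apply Subtype.ext
      rw [ψval, Units.val_mk0]
      exact hEq.symm
  have hbij : Function.Bijective ψ := ⟨hinj, hsurj⟩
  set e := Equiv.ofBijective ψ hbij with he
  refine ⟨e.symm, e.symm.bijective, ?_, ?_⟩
  · intro A hA
    rw [Equiv.symm_apply_eq]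
    apply Subtype.ext
    exact hA
  · -- multiplicativity of ψ
    have hmul : ∀ x y, (ψ (reesMul T x y)).1 = (ψ x).1 * (ψ y).1 := by
      rintro (_ | ⟨i, g, l⟩) (_ | ⟨j, h, c⟩)
      · simp [reesMul, hψ]
      · simp [reesMul, hψ]
      · simp [reesMul, hψ]
      · by_cases hd : dotProduct (v l) (v j) = 0
        · have hr : reesMul T (some (i,g,l)) (some (j,h,c)) = none := by
            simp [reesMul, hT, hd]
          rw [hr]
          show (0 : Matrix (Fin n) (Fin n) F)
              = vecMulVec ((g : F) • v i) (v l) * vecMulVec ((h : F) • v j) (v c)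
          rw [stmt6_vecMulVec_mul, dotProduct_smul, hd]
          simp
        · have hr : reesMul T (some (i,g,l)) (some (j,h,c))
              = some (i, g * Units.mk0 _ hd * h, c) := by
            simp [reesMul, hT, hd]
          rw [hr]
          show vecMulVec (((g * Units.mk0 _ hd * h : Fˣ) : F) • v i) (v c)
              = vecMulVec ((g : F) • v i) (v l) * vecMulVec ((h : F) • v j) (v c)
          rw [stmt6_vecMulVec_mul, dotProduct_smul, stmt6_smul_vecMulVec,
            stmt6_smul_vecMulVec, smul_smul, smul_eq_mul]
          congr 1
          rw [Units.val_mul, Units.val_mul, Units.val_mk0]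
          ring
    intro A B C hC
    rw [Equiv.symm_apply_eq]
    apply Subtype.ext
    show C.1 = (ψ (reesMul T (e.symm A) (e.symm B))).1
    rw [hC, hmul]
    have hA : ψ (e.symm A) = A := e.apply_symm_apply A
    have hB : ψ (e.symm B) = B := e.apply_symm_apply B
    rw [hA, hB]
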